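/- Let U ⊆ ℝ⁴ be open with coordinates (s₁,s₂,s₃,s₄), let Z : U → ℝ be a C¹ function with ∂Z/∂s₄ = 0 on U satisfying at every point of U the cubic equation Z³ − Z·(s₁²/48 + s₁s₂/80 + 3s₂²/1600) − s₁³/96 + (13/2880)s₁²s₂ − (1/28800)s₁s₂² − (41/288000)s₂³ − (3/2)s₃ = 0, and assume 3Z(s)² − (s₁²/48 + s₁s₂/80 + 3s₂²/1600) ≠ 0 at every point s ∈ U. Let F : U → ℝ be the potential defined from Z by the explicit formula given in the context. Then F satisfies the quasihomogeneity (Euler) identity (1/3)s₁·∂F/∂s₁ + (1/3)s₂·∂F/∂s₂ + s₃·∂F/∂s₃ + s₄·∂F/∂s₄ = (7/3)·F at every point of U; in particular Z itself satisfies (1/3)s₁·∂Z/∂s₁ + (1/3)s₂·∂Z/∂s₂ + s₃·∂Z/∂s₃ = (1/3)·Z. -/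

import Mathlib

/-- The partial derivative of `f : ℝ⁴ → ℝ` in the `i`-th coordinate direction. -/
noncomputable def pd (i : Fin 4) (f : (Fin 4 → ℝ) → ℝ) : (Fin 4 → ℝ) → ℝ :=
  fun p => deriv (fun t : ℝ => f (Function.update p i t)) (p i)

/-- The cubic equation satisfied by `Z` (as a function of `(s₁, s₂, s₃)`). -/
noncomputable def cubicF4 (s : Fin 4 → ℝ) (z : ℝ) : ℝ :=
  z ^ 3 - z * ((s 0) ^ 2 / 48 + (s 0) * (s 1) / 80 + 3 * (s 1) ^ 2 / 1600) -
    (s 0) ^ 3 / 96 + (13 / 2880) * (s 0) ^ 2 * (s 1) - (1 / 28800) * (s 0) * (s 1) ^ 2 -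
    (41 / 288000) * (s 1) ^ 3 - (3 / 2) * (s 2)

/-- The potential of the algebraic Frobenius manifold obtained from the distinguished
nilpotent orbit `F₄(a₂)` of the Lie algebra `F₄`, written in the flat coordinates
`(s₁, s₂, s₃, s₄) = (s 0, s 1, s 2, s 3)`, where `Z` solves the cubic `cubicF4 s (Z s) = 0`. -/
noncomputable def potF4 (Z : (Fin 4 → ℝ) → ℝ) (s : Fin 4 → ℝ) : ℝ :=
  (9 / 44800) * (Z s) ^ 2 * (s 0) ^ 5 + (3 / 89600) * (Z s) ^ 2 * (s 0) ^ 4 * (s 1) -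
    (3 / 89600) * (Z s) ^ 2 * (s 0) ^ 3 * (s 1) ^ 2 -
    (3 / 640000) * (Z s) ^ 2 * (s 0) ^ 2 * (s 1) ^ 3 +
    (153 / 89600000) * (Z s) ^ 2 * (s 0) * (s 1) ^ 4 +
    (1107 / 4480000000) * (Z s) ^ 2 * (s 1) ^ 5 +
    (81 / 2800) * (Z s) ^ 2 * (s 0) ^ 2 * (s 2) +
    (243 / 14000) * (Z s) ^ 2 * (s 0) * (s 1) * (s 2) +
    (729 / 280000) * (Z s) ^ 2 * (s 1) ^ 2 * (s 2) +
    (409 / 2419200) * (Z s) * (s 0) ^ 6 - (191 / 1344000) * (Z s) * (s 0) ^ 5 * (s 1) +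
    (187 / 5376000) * (Z s) * (s 0) ^ 4 * (s 1) ^ 2 +
    (67 / 13440000) * (Z s) * (s 0) ^ 3 * (s 1) ^ 3 -
    (319 / 179200000) * (Z s) * (s 0) ^ 2 * (s 1) ^ 4 +
    (529 / 13440000000) * (Z s) * (s 0) * (s 1) ^ 5 +
    (1247 / 38400000000) * (Z s) * (s 1) ^ 6 +
    (27 / 560) * (Z s) * (s 0) ^ 3 * (s 2) -
    (117 / 5600) * (Z s) * (s 0) ^ 2 * (s 1) * (s 2) +
    (9 / 56000) * (Z s) * (s 0) * (s 1) ^ 2 * (s 2) +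
    (369 / 560000) * (Z s) * (s 1) ^ 3 * (s 2) + (243 / 70) * (Z s) * (s 2) ^ 2 -
    (29459 / 580608000) * (s 0) ^ 6 * (s 1) + (6089 / 276480000) * (s 0) ^ 5 * (s 1) ^ 2 -
    (254609 / 34836480000) * (s 0) ^ 4 * (s 1) ^ 3 +
    (152263 / 116121600000) * (s 0) ^ 3 * (s 1) ^ 4 -
    (300457 / 5806080000000) * (s 0) ^ 2 * (s 1) ^ 5 -
    (1973651 / 174182400000000) * (s 0) * (s 1) ^ 6 +
    (292289 / 193536000000000) * (s 1) ^ 7 +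
    (17 / 44800) * (s 0) ^ 4 * (s 2) - (2647 / 336000) * (s 0) ^ 3 * (s 1) * (s 2) +
    (6059 / 2240000) * (s 0) ^ 2 * (s 1) ^ 2 * (s 2) -
    (18223 / 33600000) * (s 0) * (s 1) ^ 3 * (s 2) +
    (11443 / 174182400) * (s 0) ^ 7 + (60131 / 1344000000) * (s 1) ^ 4 * (s 2) +
    (1 / 20) * (s 0) * (s 2) ^ 2 + (3 / 200) * (s 1) * (s 2) ^ 2 -
    2 * (s 0) * (s 2) * (s 3) + (3 / 5) * (s 1) * (s 2) * (s 3) + 2 * (s 0) * (s 3) ^ 2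

/-- The flat metric `η` of the `F₄(a₂)` algebraic Frobenius manifold:
`η₁₃ = η₃₁ = −2`, `η₂₃ = η₃₂ = 3/5`, `η₁₄ = η₄₁ = 4`, all other entries `0`. -/
noncomputable def etaF4 : Matrix (Fin 4) (Fin 4) ℝ :=
  !![0, 0, -2, 4; 0, 0, 3 / 5, 0; -2, 3 / 5, 0, 0; 4, 0, 0, 0]

set_option maxHeartbeats 4000000 in
/-- the quasihomogeneity (Euler) identity of the `F₄(a₂)` algebraic Frobenius
manifold: `(1/3)s₁ ∂₁F + (1/3)s₂ ∂₂F + s₃ ∂₃F + s₄ ∂₄F = (7/3) F` on `U`; in particular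
`Z` itself satisfies `(1/3)s₁ ∂₁Z + (1/3)s₂ ∂₂Z + s₃ ∂₃Z = (1/3) Z`. -/
theorem potF4_quasihomogeneous (U : Set (Fin 4 → ℝ)) (hU : IsOpen U)
    (Z : (Fin 4 → ℝ) → ℝ) (hZsmooth : ContDiffOn ℝ 1 Z U)
    (hZ4 : ∀ p ∈ U, pd 3 Z p = 0)
    (hZcubic : ∀ p ∈ U, cubicF4 p (Z p) = 0)
    (hZnd : ∀ p ∈ U,
      3 * (Z p) ^ 2 - ((p 0) ^ 2 / 48 + (p 0) * (p 1) / 80 + 3 * (p 1) ^ 2 / 1600) ≠ 0) :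
    (∀ p ∈ U,
      (1 / 3) * (p 0) * pd 0 (potF4 Z) p + (1 / 3) * (p 1) * pd 1 (potF4 Z) p +
          (p 2) * pd 2 (potF4 Z) p + (p 3) * pd 3 (potF4 Z) p =
        (7 / 3) * potF4 Z p) ∧
    (∀ p ∈ U,
      (1 / 3) * (p 0) * pd 0 Z p + (1 / 3) * (p 1) * pd 1 Z p + (p 2) * pd 2 Z p =
        (1 / 3) * Z p) := by
  have main : ∀ p ∈ U,
      ((1 / 3) * (p 0) * pd 0 (potF4 Z) p + (1 / 3) * (p 1) * pd 1 (potF4 Z) p +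
          (p 2) * pd 2 (potF4 Z) p + (p 3) * pd 3 (potF4 Z) p =
        (7 / 3) * potF4 Z p) ∧
      ((1 / 3) * (p 0) * pd 0 Z p + (1 / 3) * (p 1) * pd 1 Z p + (p 2) * pd 2 Z p =
        (1 / 3) * Z p) := by
    intro p hp
    have hpn : U ∈ nhds p := hU.mem_nhds hp
    have hZd : DifferentiableAt ℝ Z p := (hZsmooth.contDiffAt hpn).differentiableAt one_ne_zero
    have hcub : Z p ^ 3 - Z p * ((p 0) ^ 2 / 48 + (p 0) * (p 1) / 80 + 3 * (p 1) ^ 2 / 1600) -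
        (p 0) ^ 3 / 96 + (13 / 2880) * (p 0) ^ 2 * (p 1) - (1 / 28800) * (p 0) * (p 1) ^ 2 -
        (41 / 288000) * (p 1) ^ 3 - (3 / 2) * (p 2) = 0 := hZcubic p hp
    have hWd0 : DifferentiableAt ℝ (fun t => Z (Function.update p 0 t)) (p 0) := by
      have h1 := (hasDerivAt_update p 0 (p 0)).differentiableAt
      have h2 : DifferentiableAt ℝ Z (Function.update p 0 (p 0)) := by
        rw [Function.update_eq_self]; exact hZd
      exact h2.comp (p 0) h1
    have hW0 : HasDerivAt (fun t => Z (Function.update p 0 t)) (pd 0 Z p) (p 0) := by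
      simp only [pd]; exact hWd0.hasDerivAt
    have hWd1 : DifferentiableAt ℝ (fun t => Z (Function.update p 1 t)) (p 1) := by
      have h1 := (hasDerivAt_update p 1 (p 1)).differentiableAt
      have h2 : DifferentiableAt ℝ Z (Function.update p 1 (p 1)) := by
        rw [Function.update_eq_self]; exact hZd
      exact h2.comp (p 1) h1
    have hW1 : HasDerivAt (fun t => Z (Function.update p 1 t)) (pd 1 Z p) (p 1) := by
      simp only [pd]; exact hWd1.hasDerivAt
    have hWd2 : DifferentiableAt ℝ (fun t => Z (Function.update p 2 t)) (p 2) := by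
      have h1 := (hasDerivAt_update p 2 (p 2)).differentiableAt
      have h2 : DifferentiableAt ℝ Z (Function.update p 2 (p 2)) := by
        rw [Function.update_eq_self]; exact hZd
      exact h2.comp (p 2) h1
    have hW2 : HasDerivAt (fun t => Z (Function.update p 2 t)) (pd 2 Z p) (p 2) := by
      simp only [pd]; exact hWd2.hasDerivAt
    have hWd3 : DifferentiableAt ℝ (fun t => Z (Function.update p 3 t)) (p 3) := by
      have h1 := (hasDerivAt_update p 3 (p 3)).differentiableAt
      have h2 : DifferentiableAt ℝ Z (Function.update p 3 (p 3)) := by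
        rw [Function.update_eq_self]; exact hZd
      exact h2.comp (p 3) h1
    have hW3 : HasDerivAt (fun t => Z (Function.update p 3 t)) (pd 3 Z p) (p 3) := by
      simp only [pd]; exact hWd3.hasDerivAt
    have hev0 : ∀ᶠ t in nhds (p 0), Function.update p 0 t ∈ U := by
      have hc : ContinuousAt (Function.update p 0) (p 0) :=
        (hasDerivAt_update p 0 (p 0)).continuousAt
      have h3 := hc.preimage_mem_nhds (by rw [Function.update_eq_self]; exact hpn)
      exact h3
    have hC0 : HasDerivAt (fun t => cubicF4 (Function.update p 0 t) (Z (Function.update p 0 t)))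
        _ (p 0) :=
      (((((((((hasDerivAt_const (p 0) ((-3 / 2 : ℝ) * p 2 + (-41 / 288000 : ℝ) * p 1 ^ 3)).add ((hasDerivAt_pow 1 (p 0)).const_mul ((-1 / 28800 : ℝ) * p 1 ^ 2))).add ((hasDerivAt_pow 2 (p 0)).const_mul ((13 / 2880 : ℝ) * p 1))).add ((hasDerivAt_pow 3 (p 0)).const_mul ((-1 / 96 : ℝ)))).add ((hW0.pow 1).const_mul ((-3 / 1600 : ℝ) * p 1 ^ 2))).add (((hW0.pow 1).mul (hasDerivAt_pow 1 (p 0))).const_mul ((-1 / 80 : ℝ) * p 1))).add (((hW0.pow 1).mul (hasDerivAt_pow 2 (p 0))).const_mul ((-1 / 48 : ℝ)))).add ((hW0.pow 3).const_mul ((1 : ℝ))))).congr_of_eventuallyEq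
        (Filter.Eventually.of_forall fun t => by simp [cubicF4, Function.update_apply]; ring)
    have hC00 : HasDerivAt (fun t => cubicF4 (Function.update p 0 t) (Z (Function.update p 0 t)))
        0 (p 0) := by
      refine (hasDerivAt_const (p 0) (0:ℝ)).congr_of_eventuallyEq ?_
      filter_upwards [hev0] with t ht
      exact hZcubic _ ht
    have R0 : (3 : ℝ) * Z p ^ 2 * pd 0 Z p + (-1 / 80 : ℝ) * p 1 * Z p + (-1 / 28800 : ℝ) * p 1 ^ 2 + (-3 / 1600 : ℝ) * p 1 ^ 2 * pd 0 Z p + (-1 / 24 : ℝ) * p 0 * Z p + (13 / 1440 : ℝ) * p 0 * p 1 + (-1 / 80 : ℝ) * p 0 * p 1 * pd 0 Z p + (-1 / 32 : ℝ) * p 0 ^ 2 + (-1 / 48 : ℝ) * p 0 ^ 2 * pd 0 Z p = 0 := by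
      have h := hC0.unique hC00
      simp only [Function.update_eq_self, Pi.pow_apply] at h
      push_cast at h
      linear_combination h
    have hev1 : ∀ᶠ t in nhds (p 1), Function.update p 1 t ∈ U := by
      have hc : ContinuousAt (Function.update p 1) (p 1) :=
        (hasDerivAt_update p 1 (p 1)).continuousAt
      have h3 := hc.preimage_mem_nhds (by rw [Function.update_eq_self]; exact hpn)
      exact h3
    have hC1 : HasDerivAt (fun t => cubicF4 (Function.update p 1 t) (Z (Function.update p 1 t)))
        _ (p 1) :=
      (((((((((hasDerivAt_const (p 1) ((-3 / 2 : ℝ) * p 2 + (-1 / 96 : ℝ) * p 0 ^ 3)).add ((hasDerivAt_pow 1 (p 1)).const_mul ((13 / 2880 : ℝ) * p 0 ^ 2))).add ((hasDerivAt_pow 2 (p 1)).const_mul ((-1 / 28800 : ℝ) * p 0))).add ((hasDerivAt_pow 3 (p 1)).const_mul ((-41 / 288000 : ℝ)))).add ((hW1.pow 1).const_mul ((-1 / 48 : ℝ) * p 0 ^ 2))).add (((hW1.pow 1).mul (hasDerivAt_pow 1 (p 1))).const_mul ((-1 / 80 : ℝ) * p 0))).add (((hW1.pow 1).mul (hasDerivAt_pow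 2 (p 1))).const_mul ((-3 / 1600 : ℝ)))).add ((hW1.pow 3).const_mul ((1 : ℝ))))).congr_of_eventuallyEq
        (Filter.Eventually.of_forall fun t => by simp [cubicF4, Function.update_apply]; ring)
    have hC01 : HasDerivAt (fun t => cubicF4 (Function.update p 1 t) (Z (Function.update p 1 t)))
        0 (p 1) := by
      refine (hasDerivAt_const (p 1) (0:ℝ)).congr_of_eventuallyEq ?_
      filter_upwards [hev1] with t ht
      exact hZcubic _ ht
    have R1 : (3 : ℝ) * Z p ^ 2 * pd 1 Z p + (-3 / 800 : ℝ) * p 1 * Z p + (-41 / 96000 : ℝ) * p 1 ^ 2 + (-3 / 1600 : ℝ) * p 1 ^ 2 * pd 1 Z p + (-1 / 80 : ℝ) * p 0 * Z p + (-1 / 14400 : ℝ) * p 0 * p 1 + (-1 / 80 : ℝ) * p 0 * p 1 * pd 1 Z p + (13 / 2880 : ℝ) * p 0 ^ 2 + (-1 / 48 : ℝ) * p 0 ^ 2 * pd 1 Z p = 0 := by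
      have h := hC1.unique hC01
      simp only [Function.update_eq_self, Pi.pow_apply] at h
      push_cast at h
      linear_combination h
    have hev2 : ∀ᶠ t in nhds (p 2), Function.update p 2 t ∈ U := by
      have hc : ContinuousAt (Function.update p 2) (p 2) :=
        (hasDerivAt_update p 2 (p 2)).continuousAt
      have h3 := hc.preimage_mem_nhds (by rw [Function.update_eq_self]; exact hpn)
      exact h3
    have hC2 : HasDerivAt (fun t => cubicF4 (Function.update p 2 t) (Z (Function.update p 2 t)))
        _ (p 2) :=
      (((((hasDerivAt_const (p 2) ((-41 / 288000 : ℝ) * p 1 ^ 3 + (-1 / 28800 : ℝ) * p 0 * p 1 ^ 2 + (13 / 2880 : ℝ) * p 0 ^ 2 * p 1 + (-1 / 96 : ℝ) * p 0 ^ 3)).add ((hasDerivAt_pow 1 (p 2)).const_mul ((-3 / 2 : ℝ)))).add ((hW2.pow 1).const_mul ((-3 / 1600 : ℝ) * p 1 ^ 2 + (-1 / 80 : ℝ) * p 0 * p 1 + (-1 / 48 : ℝ) * p 0 ^ 2))).add ((hW2.pow 3).const_mul ((1 : ℝ))))).congr_of_eventuallyEq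
        (Filter.Eventually.of_forall fun t => by simp [cubicF4, Function.update_apply]; ring)
    have hC02 : HasDerivAt (fun t => cubicF4 (Function.update p 2 t) (Z (Function.update p 2 t)))
        0 (p 2) := by
      refine (hasDerivAt_const (p 2) (0:ℝ)).congr_of_eventuallyEq ?_
      filter_upwards [hev2] with t ht
      exact hZcubic _ ht
    have R2 : (-3 / 2 : ℝ) + (3 : ℝ) * Z p ^ 2 * pd 2 Z p + (-3 / 1600 : ℝ) * p 1 ^ 2 * pd 2 Z p + (-1 / 80 : ℝ) * p 0 * p 1 * pd 2 Z p + (-1 / 48 : ℝ) * p 0 ^ 2 * pd 2 Z p = 0 := by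
      have h := hC2.unique hC02
      simp only [Function.update_eq_self] at h
      push_cast at h
      linear_combination h
    have hP0 : HasDerivAt (fun t => potF4 Z (Function.update p 0 t)) _ (p 0) :=
      ((((((((((((((((((((((hasDerivAt_const (p 0) ((3 / 5 : ℝ) * p 1 * p 2 * p 3 + (3 / 200 : ℝ) * p 1 * p 2 ^ 2 + (60131 / 1344000000 : ℝ) * p 1 ^ 4 * p 2 + (292289 / 193536000000000 : ℝ) * p 1 ^ 7)).add ((hasDerivAt_pow 1 (p 0)).const_mul ((2 : ℝ) * p 3 ^ 2 + (-2 : ℝ) * p 2 * p 3 + (1 / 20 : ℝ) * p 2 ^ 2 + (-18223 / 33600000 : ℝ) * p 1 ^ 3 * p 2 + (-1973651 / 174182400000000 : ℝ) * p 1 ^ 6))).add ((hasDerivAt_pow 2 (p 0)).const_mul ((6059 / 2240000 : ℝ) * p 1 ^ 2 * p 2 + (-300457 / 5806080000000 : ℝ) * p 1 ^ 5))).add ((hasDerivAt_pow 3 (p 0)).const_mul ((-2647 / 336000 : ℝ) * p 1 * p 2 + (152263 / 116121600000 : ℝ) * p 1 ^ 4))).add ((hasDerivAt_pow 4 (p 0)).const_mul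 ((17 / 44800 : ℝ) * p 2 + (-254609 / 34836480000 : ℝ) * p 1 ^ 3))).add ((hasDerivAt_pow 5 (p 0)).const_mul ((6089 / 276480000 : ℝ) * p 1 ^ 2))).add ((hasDerivAt_pow 6 (p 0)).const_mul ((-29459 / 580608000 : ℝ) * p 1))).add ((hasDerivAt_pow 7 (p 0)).const_mul ((11443 / 174182400 : ℝ)))).add ((hW0.pow 1).const_mul ((243 / 70 : ℝ) * p 2 ^ 2 + (369 / 560000 : ℝ) * p 1 ^ 3 * p 2 + (1247 / 38400000000 : ℝ) * p 1 ^ 6))).add (((hW0.pow 1).mul (hasDerivAt_pow 1 (p 0))).const_mul ((9 / 56000 : ℝ) * p 1 ^ 2 * p 2 + (529 / 13440000000 : ℝ) * p 1 ^ 5))).add (((hW0.pow 1).mul (hasDerivAt_pow 2 (p 0))).const_mul ((-117 / 5600 : ℝ) * p 1 * p 2 + (-319 / 179200000 : ℝ) * p 1 ^ 4))).add (((hW0.pow 1).mul (hasDerivAt_pow 3 (p 0))).const_mul ((27 / 560 : ℝ) * p 2 + (67 / 13440000 : ℝ) * p 1 ^ 3))).add (((hW0.pow 1).mul (hasDerivAt_pow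 4 (p 0))).const_mul ((187 / 5376000 : ℝ) * p 1 ^ 2))).add (((hW0.pow 1).mul (hasDerivAt_pow 5 (p 0))).const_mul ((-191 / 1344000 : ℝ) * p 1))).add (((hW0.pow 1).mul (hasDerivAt_pow 6 (p 0))).const_mul ((409 / 2419200 : ℝ)))).add ((hW0.pow 2).const_mul ((729 / 280000 : ℝ) * p 1 ^ 2 * p 2 + (1107 / 4480000000 : ℝ) * p 1 ^ 5))).add (((hW0.pow 2).mul (hasDerivAt_pow 1 (p 0))).const_mul ((243 / 14000 : ℝ) * p 1 * p 2 + (153 / 89600000 : ℝ) * p 1 ^ 4))).add (((hW0.pow 2).mul (hasDerivAt_pow 2 (p 0))).const_mul ((81 / 2800 : ℝ) * p 2 + (-3 / 640000 : ℝ) * p 1 ^ 3))).add (((hW0.pow 2).mul (hasDerivAt_pow 3 (p 0))).const_mul ((-3 / 89600 : ℝ) * p 1 ^ 2))).add (((hW0.pow 2).mul (hasDerivAt_pow 4 (p 0))).const_mul ((3 / 89600 : ℝ) * p 1))).add (((hW0.pow 2).mul (hasDerivAt_pow 5 (p 0))).const_mul ((9 / 44800 : ℝ))))).congr_of_eventu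allyEq
        (Filter.Eventually.of_forall fun t => by simp [potF4, Function.update_apply]; ring)
    have e0 : pd 0 (potF4 Z) p = (2 : ℝ) * p 3 ^ 2 + (-2 : ℝ) * p 2 * p 3 + (1 / 20 : ℝ) * p 2 ^ 2 + (243 / 70 : ℝ) * p 2 ^ 2 * pd 0 Z p + (243 / 14000 : ℝ) * p 1 * p 2 * Z p ^ 2 + (9 / 56000 : ℝ) * p 1 ^ 2 * p 2 * Z p + (729 / 140000 : ℝ) * p 1 ^ 2 * p 2 * Z p * pd 0 Z p + (-18223 / 33600000 : ℝ) * p 1 ^ 3 * p 2 + (369 / 560000 : ℝ) * p 1 ^ 3 * p 2 * pd 0 Z p + (153 / 89600000 : ℝ) * p 1 ^ 4 * Z p ^ 2 + (529 / 13440000000 : ℝ) * p 1 ^ 5 * Z p + (1107 / 2240000000 : ℝ) * p 1 ^ 5 * Z p * pd 0 Z p + (-1973651 / 174182400000000 : ℝ) * p 1 ^ 6 + (1247 / 38400000000 : ℝ) * p 1 ^ 6 * pd 0 Z p + (81 / 1400 : ℝ) * p 0 * p 2 * Z p ^ 2 + (-117 / 2800 : ℝ) * p 0 * p 1 * p 2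 * Z p + (243 / 7000 : ℝ) * p 0 * p 1 * p 2 * Z p * pd 0 Z p + (6059 / 1120000 : ℝ) * p 0 * p 1 ^ 2 * p 2 + (9 / 56000 : ℝ) * p 0 * p 1 ^ 2 * p 2 * pd 0 Z p + (-3 / 320000 : ℝ) * p 0 * p 1 ^ 3 * Z p ^ 2 + (-319 / 89600000 : ℝ) * p 0 * p 1 ^ 4 * Z p + (153 / 44800000 : ℝ) * p 0 * p 1 ^ 4 * Z p * pd 0 Z p + (-300457 / 2903040000000 : ℝ) * p 0 * p 1 ^ 5 + (529 / 13440000000 : ℝ) * p 0 * p 1 ^ 5 * pd 0 Z p + (81 / 560 : ℝ) * p 0 ^ 2 * p 2 * Z p + (81 / 1400 : ℝ) * p 0 ^ 2 * p 2 * Z p * pd 0 Z p + (-2647 / 112000 : ℝ) * p 0 ^ 2 * p 1 * p 2 + (-117 / 5600 : ℝ) * p 0 ^ 2 * p 1 * p 2 * pd 0 Z p + (-9 / 89600 : ℝ) * p 0 ^ 2 * p 1 ^ 2 * Z p ^ 2 + (67 / 4480000 : ℝ) * p 0 ^ 2 * p 1 ^ 3 * Z p + (-3 / 320000 : ℝ)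 * p 0 ^ 2 * p 1 ^ 3 * Z p * pd 0 Z p + (152263 / 38707200000 : ℝ) * p 0 ^ 2 * p 1 ^ 4 + (-319 / 179200000 : ℝ) * p 0 ^ 2 * p 1 ^ 4 * pd 0 Z p + (17 / 11200 : ℝ) * p 0 ^ 3 * p 2 + (27 / 560 : ℝ) * p 0 ^ 3 * p 2 * pd 0 Z p + (3 / 22400 : ℝ) * p 0 ^ 3 * p 1 * Z p ^ 2 + (187 / 1344000 : ℝ) * p 0 ^ 3 * p 1 ^ 2 * Z p + (-3 / 44800 : ℝ) * p 0 ^ 3 * p 1 ^ 2 * Z p * pd 0 Z p + (-254609 / 8709120000 : ℝ) * p 0 ^ 3 * p 1 ^ 3 + (67 / 13440000 : ℝ) * p 0 ^ 3 * p 1 ^ 3 * pd 0 Z p + (9 / 8960 : ℝ) * p 0 ^ 4 * Z p ^ 2 + (-191 / 268800 : ℝ) * p 0 ^ 4 * p 1 * Z p + (3 / 44800 : ℝ) * p 0 ^ 4 * p 1 * Z p * pd 0 Z p + (6089 / 55296000 : ℝ) * p 0 ^ 4 * p 1 ^ 2 + (187 / 5376000 : ℝ) * p 0 ^ 4 * p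 1 ^ 2 * pd 0 Z p + (409 / 403200 : ℝ) * p 0 ^ 5 * Z p + (9 / 22400 : ℝ) * p 0 ^ 5 * Z p * pd 0 Z p + (-29459 / 96768000 : ℝ) * p 0 ^ 5 * p 1 + (-191 / 1344000 : ℝ) * p 0 ^ 5 * p 1 * pd 0 Z p + (11443 / 24883200 : ℝ) * p 0 ^ 6 + (409 / 2419200 : ℝ) * p 0 ^ 6 * pd 0 Z p := by
      show deriv (fun t => potF4 Z (Function.update p 0 t)) (p 0) = _
      rw [hP0.deriv]; simp only [Function.update_eq_self, Pi.pow_apply]; push_cast; ring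
    have hP1 : HasDerivAt (fun t => potF4 Z (Function.update p 1 t)) _ (p 1) :=
      ((((((((((((((((((((((hasDerivAt_const (p 1) ((2 : ℝ) * p 0 * p 3 ^ 2 + (-2 : ℝ) * p 0 * p 2 * p 3 + (1 / 20 : ℝ) * p 0 * p 2 ^ 2 + (17 / 44800 : ℝ) * p 0 ^ 4 * p 2 + (11443 / 174182400 : ℝ) * p 0 ^ 7)).add ((hasDerivAt_pow 1 (p 1)).const_mul ((3 / 5 : ℝ) * p 2 * p 3 + (3 / 200 : ℝ) * p 2 ^ 2 + (-2647 / 336000 : ℝ) * p 0 ^ 3 * p 2 + (-29459 / 580608000 : ℝ) * p 0 ^ 6))).add ((hasDerivAt_pow 2 (p 1)).const_mul ((6059 / 2240000 : ℝ) * p 0 ^ 2 * p 2 + (6089 / 276480000 : ℝ) * p 0 ^ 5))).add ((hasDerivAt_pow 3 (p 1)).const_mul ((-18223 / 33600000 : ℝ) * p 0 * p 2 + (-254609 / 34836480000 : ℝ) * p 0 ^ 4))).add ((hasDerivAt_pow 4 (p 1)).const_mul ((60131 / 1344000000 : ℝ) * p 2 + (152263 / 116121600000 : ℝ) * p 0 ^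 3))).add ((hasDerivAt_pow 5 (p 1)).const_mul ((-300457 / 5806080000000 : ℝ) * p 0 ^ 2))).add ((hasDerivAt_pow 6 (p 1)).const_mul ((-1973651 / 174182400000000 : ℝ) * p 0))).add ((hasDerivAt_pow 7 (p 1)).const_mul ((292289 / 193536000000000 : ℝ)))).add ((hW1.pow 1).const_mul ((243 / 70 : ℝ) * p 2 ^ 2 + (27 / 560 : ℝ) * p 0 ^ 3 * p 2 + (409 / 2419200 : ℝ) * p 0 ^ 6))).add (((hW1.pow 1).mul (hasDerivAt_pow 1 (p 1))).const_mul ((-117 / 5600 : ℝ) * p 0 ^ 2 * p 2 + (-191 / 1344000 : ℝ) * p 0 ^ 5))).add (((hW1.pow 1).mul (hasDerivAt_pow 2 (p 1))).const_mul ((9 / 56000 : ℝ) * p 0 * p 2 + (187 / 5376000 : ℝ) * p 0 ^ 4))).add (((hW1.pow 1).mul (hasDerivAt_pow 3 (p 1))).const_mul ((369 / 560000 : ℝ) * p 2 + (67 / 13440000 : ℝ) * p 0 ^ 3))).add (((hW1.pow 1).mul (hasDerivAt_pow 4 (p 1))).const_mul ((-319 / 179200000 : ℝ) * p 0 ^ 2))).add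 (((hW1.pow 1).mul (hasDerivAt_pow 5 (p 1))).const_mul ((529 / 13440000000 : ℝ) * p 0))).add (((hW1.pow 1).mul (hasDerivAt_pow 6 (p 1))).const_mul ((1247 / 38400000000 : ℝ)))).add ((hW1.pow 2).const_mul ((81 / 2800 : ℝ) * p 0 ^ 2 * p 2 + (9 / 44800 : ℝ) * p 0 ^ 5))).add (((hW1.pow 2).mul (hasDerivAt_pow 1 (p 1))).const_mul ((243 / 14000 : ℝ) * p 0 * p 2 + (3 / 89600 : ℝ) * p 0 ^ 4))).add (((hW1.pow 2).mul (hasDerivAt_pow 2 (p 1))).const_mul ((729 / 280000 : ℝ) * p 2 + (-3 / 89600 : ℝ) * p 0 ^ 3))).add (((hW1.pow 2).mul (hasDerivAt_pow 3 (p 1))).const_mul ((-3 / 640000 : ℝ) * p 0 ^ 2))).add (((hW1.pow 2).mul (hasDerivAt_pow 4 (p 1))).const_mul ((153 / 89600000 : ℝ) * p 0))).add (((hW1.pow 2).mul (hasDerivAt_pow 5 (p 1))).const_mul ((1107 / 4480000000 : ℝ))))).congr_of_eventuallyEq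
        (Filter.Eventually.of_forall fun t => by simp [potF4, Function.update_apply]; ring)
    have e1 : pd 1 (potF4 Z) p = (3 / 5 : ℝ) * p 2 * p 3 + (3 / 200 : ℝ) * p 2 ^ 2 + (243 / 70 : ℝ) * p 2 ^ 2 * pd 1 Z p + (729 / 140000 : ℝ) * p 1 * p 2 * Z p ^ 2 + (1107 / 560000 : ℝ) * p 1 ^ 2 * p 2 * Z p + (729 / 140000 : ℝ) * p 1 ^ 2 * p 2 * Z p * pd 1 Z p + (60131 / 336000000 : ℝ) * p 1 ^ 3 * p 2 + (369 / 560000 : ℝ) * p 1 ^ 3 * p 2 * pd 1 Z p + (1107 / 896000000 : ℝ) * p 1 ^ 4 * Z p ^ 2 + (1247 / 6400000000 : ℝ) * p 1 ^ 5 * Z p + (1107 / 2240000000 : ℝ) * p 1 ^ 5 * Z p * pd 1 Z p + (292289 / 27648000000000 : ℝ) * p 1 ^ 6 + (1247 / 38400000000 : ℝ) * p 1 ^ 6 * pd 1 Z p + (243 / 14000 : ℝ) * p 0 * p 2 * Z p ^ 2 + (9 / 28000 : ℝ) * p 0 * p 1 * p 2 * Z p + (243 / 7000 : ℝ) * p 0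 * p 1 * p 2 * Z p * pd 1 Z p + (-18223 / 11200000 : ℝ) * p 0 * p 1 ^ 2 * p 2 + (9 / 56000 : ℝ) * p 0 * p 1 ^ 2 * p 2 * pd 1 Z p + (153 / 22400000 : ℝ) * p 0 * p 1 ^ 3 * Z p ^ 2 + (529 / 2688000000 : ℝ) * p 0 * p 1 ^ 4 * Z p + (153 / 44800000 : ℝ) * p 0 * p 1 ^ 4 * Z p * pd 1 Z p + (-1973651 / 29030400000000 : ℝ) * p 0 * p 1 ^ 5 + (529 / 13440000000 : ℝ) * p 0 * p 1 ^ 5 * pd 1 Z p + (-117 / 5600 : ℝ) * p 0 ^ 2 * p 2 * Z p + (81 / 1400 : ℝ) * p 0 ^ 2 * p 2 * Z p * pd 1 Z p + (6059 / 1120000 : ℝ) * p 0 ^ 2 * p 1 * p 2 + (-117 / 5600 : ℝ) * p 0 ^ 2 * p 1 * p 2 * pd 1 Z p + (-9 / 640000 : ℝ) * p 0 ^ 2 * p 1 ^ 2 * Z p ^ 2 + (-319 / 44800000 : ℝ) * p 0 ^ 2 * p 1 ^ 3 * Z p + (-3 / 320000 : ℝ) * p 0 ^ 2 * p 1 ^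 3 * Z p * pd 1 Z p + (-300457 / 1161216000000 : ℝ) * p 0 ^ 2 * p 1 ^ 4 + (-319 / 179200000 : ℝ) * p 0 ^ 2 * p 1 ^ 4 * pd 1 Z p + (-2647 / 336000 : ℝ) * p 0 ^ 3 * p 2 + (27 / 560 : ℝ) * p 0 ^ 3 * p 2 * pd 1 Z p + (-3 / 44800 : ℝ) * p 0 ^ 3 * p 1 * Z p ^ 2 + (67 / 4480000 : ℝ) * p 0 ^ 3 * p 1 ^ 2 * Z p + (-3 / 44800 : ℝ) * p 0 ^ 3 * p 1 ^ 2 * Z p * pd 1 Z p + (152263 / 29030400000 : ℝ) * p 0 ^ 3 * p 1 ^ 3 + (67 / 13440000 : ℝ) * p 0 ^ 3 * p 1 ^ 3 * pd 1 Z p + (3 / 89600 : ℝ) * p 0 ^ 4 * Z p ^ 2 + (187 / 2688000 : ℝ) * p 0 ^ 4 * p 1 * Z p + (3 / 44800 : ℝ) * p 0 ^ 4 * p 1 * Z p * pd 1 Z p + (-254609 / 11612160000 : ℝ) * p 0 ^ 4 * p 1 ^ 2 + (187 / 5376000 : ℝ) * p 0 ^ 4 * p 1 ^ 2 * pd 1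 Z p + (-191 / 1344000 : ℝ) * p 0 ^ 5 * Z p + (9 / 22400 : ℝ) * p 0 ^ 5 * Z p * pd 1 Z p + (6089 / 138240000 : ℝ) * p 0 ^ 5 * p 1 + (-191 / 1344000 : ℝ) * p 0 ^ 5 * p 1 * pd 1 Z p + (-29459 / 580608000 : ℝ) * p 0 ^ 6 + (409 / 2419200 : ℝ) * p 0 ^ 6 * pd 1 Z p := by
      show deriv (fun t => potF4 Z (Function.update p 1 t)) (p 1) = _
      rw [hP1.deriv]; simp only [Function.update_eq_self, Pi.pow_apply]; push_cast; ring
    have hP2 : HasDerivAt (fun t => potF4 Z (Function.update p 2 t)) _ (p 2) :=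
      (((((((((hasDerivAt_const (p 2) ((292289 / 193536000000000 : ℝ) * p 1 ^ 7 + (2 : ℝ) * p 0 * p 3 ^ 2 + (-1973651 / 174182400000000 : ℝ) * p 0 * p 1 ^ 6 + (-300457 / 5806080000000 : ℝ) * p 0 ^ 2 * p 1 ^ 5 + (152263 / 116121600000 : ℝ) * p 0 ^ 3 * p 1 ^ 4 + (-254609 / 34836480000 : ℝ) * p 0 ^ 4 * p 1 ^ 3 + (6089 / 276480000 : ℝ) * p 0 ^ 5 * p 1 ^ 2 + (-29459 / 580608000 : ℝ) * p 0 ^ 6 * p 1 + (11443 / 174182400 : ℝ) * p 0 ^ 7)).add ((hasDerivAt_pow 1 (p 2)).const_mul ((3 / 5 : ℝ) * p 1 * p 3 + (60131 / 1344000000 : ℝ) * p 1 ^ 4 + (-2 : ℝ) * p 0 * p 3 + (-18223 / 33600000 : ℝ) * p 0 * p 1 ^ 3 + (6059 / 2240000 : ℝ) * p 0 ^ 2 * p 1 ^ 2 + (-2647 / 336000 : ℝ) * p 0 ^ 3 * p 1 + (17 / 44800 : ℝ) * p 0 ^ 4))).add ((hasDerivAt_pow 2 (p 2)).const_mul ((3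 / 200 : ℝ) * p 1 + (1 / 20 : ℝ) * p 0))).add ((hW2.pow 1).const_mul ((1247 / 38400000000 : ℝ) * p 1 ^ 6 + (529 / 13440000000 : ℝ) * p 0 * p 1 ^ 5 + (-319 / 179200000 : ℝ) * p 0 ^ 2 * p 1 ^ 4 + (67 / 13440000 : ℝ) * p 0 ^ 3 * p 1 ^ 3 + (187 / 5376000 : ℝ) * p 0 ^ 4 * p 1 ^ 2 + (-191 / 1344000 : ℝ) * p 0 ^ 5 * p 1 + (409 / 2419200 : ℝ) * p 0 ^ 6))).add (((hW2.pow 1).mul (hasDerivAt_pow 1 (p 2))).const_mul ((369 / 560000 : ℝ) * p 1 ^ 3 + (9 / 56000 : ℝ) * p 0 * p 1 ^ 2 + (-117 / 5600 : ℝ) * p 0 ^ 2 * p 1 + (27 / 560 : ℝ) * p 0 ^ 3))).add (((hW2.pow 1).mul (hasDerivAt_pow 2 (p 2))).const_mul ((243 / 70 : ℝ)))).add ((hW2.pow 2).const_mul ((1107 / 4480000000 : ℝ) * p 1 ^ 5 + (153 / 89600000 : ℝ) * p 0 * p 1 ^ 4 + (-3 / 640000 : ℝ) * p 0 ^ 2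 * p 1 ^ 3 + (-3 / 89600 : ℝ) * p 0 ^ 3 * p 1 ^ 2 + (3 / 89600 : ℝ) * p 0 ^ 4 * p 1 + (9 / 44800 : ℝ) * p 0 ^ 5))).add (((hW2.pow 2).mul (hasDerivAt_pow 1 (p 2))).const_mul ((729 / 280000 : ℝ) * p 1 ^ 2 + (243 / 14000 : ℝ) * p 0 * p 1 + (81 / 2800 : ℝ) * p 0 ^ 2)))).congr_of_eventuallyEq
        (Filter.Eventually.of_forall fun t => by simp [potF4, Function.update_apply]; ring)
    have e2 : pd 2 (potF4 Z) p = (243 / 35 : ℝ) * p 2 * Z p + (243 / 70 : ℝ) * p 2 ^ 2 * pd 2 Z p + (3 / 5 : ℝ) * p 1 * p 3 + (3 / 100 : ℝ) * p 1 * p 2 + (729 / 280000 : ℝ) * p 1 ^ 2 * Z p ^ 2 + (729 / 140000 : ℝ) * p 1 ^ 2 * p 2 * Z p * pd 2 Z p + (369 / 560000 : ℝ) * p 1 ^ 3 * Z p + (369 / 560000 : ℝ) * p 1 ^ 3 * p 2 * pd 2 Z p + (60131 / 1344000000 : ℝ) * p 1 ^ 4 + (1107 / 2240000000 : ℝ)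 * p 1 ^ 5 * Z p * pd 2 Z p + (1247 / 38400000000 : ℝ) * p 1 ^ 6 * pd 2 Z p + (-2 : ℝ) * p 0 * p 3 + (1 / 10 : ℝ) * p 0 * p 2 + (243 / 14000 : ℝ) * p 0 * p 1 * Z p ^ 2 + (243 / 7000 : ℝ) * p 0 * p 1 * p 2 * Z p * pd 2 Z p + (9 / 56000 : ℝ) * p 0 * p 1 ^ 2 * Z p + (9 / 56000 : ℝ) * p 0 * p 1 ^ 2 * p 2 * pd 2 Z p + (-18223 / 33600000 : ℝ) * p 0 * p 1 ^ 3 + (153 / 44800000 : ℝ) * p 0 * p 1 ^ 4 * Z p * pd 2 Z p + (529 / 13440000000 : ℝ) * p 0 * p 1 ^ 5 * pd 2 Z p + (81 / 2800 : ℝ) * p 0 ^ 2 * Z p ^ 2 + (81 / 1400 : ℝ) * p 0 ^ 2 * p 2 * Z p * pd 2 Z p + (-117 / 5600 : ℝ) * p 0 ^ 2 * p 1 * Z p + (-117 / 5600 : ℝ) * p 0 ^ 2 * p 1 * p 2 * pd 2 Z p + (6059 / 2240000 : ℝ) * p 0 ^ 2 * p 1 ^ 2 + (-3 / 320000 : ℝ)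 * p 0 ^ 2 * p 1 ^ 3 * Z p * pd 2 Z p + (-319 / 179200000 : ℝ) * p 0 ^ 2 * p 1 ^ 4 * pd 2 Z p + (27 / 560 : ℝ) * p 0 ^ 3 * Z p + (27 / 560 : ℝ) * p 0 ^ 3 * p 2 * pd 2 Z p + (-2647 / 336000 : ℝ) * p 0 ^ 3 * p 1 + (-3 / 44800 : ℝ) * p 0 ^ 3 * p 1 ^ 2 * Z p * pd 2 Z p + (67 / 13440000 : ℝ) * p 0 ^ 3 * p 1 ^ 3 * pd 2 Z p + (17 / 44800 : ℝ) * p 0 ^ 4 + (3 / 44800 : ℝ) * p 0 ^ 4 * p 1 * Z p * pd 2 Z p + (187 / 5376000 : ℝ) * p 0 ^ 4 * p 1 ^ 2 * pd 2 Z p + (9 / 22400 : ℝ) * p 0 ^ 5 * Z p * pd 2 Z p + (-191 / 1344000 : ℝ) * p 0 ^ 5 * p 1 * pd 2 Z p + (409 / 2419200 : ℝ) * p 0 ^ 6 * pd 2 Z p := by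
      show deriv (fun t => potF4 Z (Function.update p 2 t)) (p 2) = _
      rw [hP2.deriv]; simp only [Function.update_eq_self, Pi.pow_apply]; push_cast; ring
    have hP3 : HasDerivAt (fun t => potF4 Z (Function.update p 3 t)) _ (p 3) :=
      ((((((hasDerivAt_const (p 3) ((3 / 200 : ℝ) * p 1 * p 2 ^ 2 + (60131 / 1344000000 : ℝ) * p 1 ^ 4 * p 2 + (292289 / 193536000000000 : ℝ) * p 1 ^ 7 + (1 / 20 : ℝ) * p 0 * p 2 ^ 2 + (-18223 / 33600000 : ℝ) * p 0 * p 1 ^ 3 * p 2 + (-1973651 / 174182400000000 : ℝ) * p 0 * p 1 ^ 6 + (6059 / 2240000 : ℝ) * p 0 ^ 2 * p 1 ^ 2 * p 2 + (-300457 / 5806080000000 : ℝ) * p 0 ^ 2 * p 1 ^ 5 + (-2647 / 336000 : ℝ) * p 0 ^ 3 * p 1 * p 2 + (152263 / 116121600000 : ℝ) * p 0 ^ 3 * p 1 ^ 4 + (17 / 44800 : ℝ) * p 0 ^ 4 * p 2 + (-254609 / 34836480000 : ℝ) * p 0 ^ 4 * p 1 ^ 3 + (6089 / 276480000 : ℝ)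 * p 0 ^ 5 * p 1 ^ 2 + (-29459 / 580608000 : ℝ) * p 0 ^ 6 * p 1 + (11443 / 174182400 : ℝ) * p 0 ^ 7)).add ((hasDerivAt_pow 1 (p 3)).const_mul ((3 / 5 : ℝ) * p 1 * p 2 + (-2 : ℝ) * p 0 * p 2))).add ((hasDerivAt_pow 2 (p 3)).const_mul ((2 : ℝ) * p 0))).add ((hW3.pow 1).const_mul ((243 / 70 : ℝ) * p 2 ^ 2 + (369 / 560000 : ℝ) * p 1 ^ 3 * p 2 + (1247 / 38400000000 : ℝ) * p 1 ^ 6 + (9 / 56000 : ℝ) * p 0 * p 1 ^ 2 * p 2 + (529 / 13440000000 : ℝ) * p 0 * p 1 ^ 5 + (-117 / 5600 : ℝ) * p 0 ^ 2 * p 1 * p 2 + (-319 / 179200000 : ℝ) * p 0 ^ 2 * p 1 ^ 4 + (27 / 560 : ℝ) * p 0 ^ 3 * p 2 + (67 / 13440000 : ℝ) * p 0 ^ 3 * p 1 ^ 3 + (187 / 5376000 : ℝ) * p 0 ^ 4 * p 1 ^ 2 + (-191 / 1344000 : ℝ) * p 0 ^ 5 * p 1 + (409 / 2419200 : ℝ)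 * p 0 ^ 6))).add ((hW3.pow 2).const_mul ((729 / 280000 : ℝ) * p 1 ^ 2 * p 2 + (1107 / 4480000000 : ℝ) * p 1 ^ 5 + (243 / 14000 : ℝ) * p 0 * p 1 * p 2 + (153 / 89600000 : ℝ) * p 0 * p 1 ^ 4 + (81 / 2800 : ℝ) * p 0 ^ 2 * p 2 + (-3 / 640000 : ℝ) * p 0 ^ 2 * p 1 ^ 3 + (-3 / 89600 : ℝ) * p 0 ^ 3 * p 1 ^ 2 + (3 / 89600 : ℝ) * p 0 ^ 4 * p 1 + (9 / 44800 : ℝ) * p 0 ^ 5)))).congr_of_eventuallyEq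
        (Filter.Eventually.of_forall fun t => by simp [potF4, Function.update_apply]; ring)
    have e3 : pd 3 (potF4 Z) p = (243 / 70 : ℝ) * p 2 ^ 2 * pd 3 Z p + (3 / 5 : ℝ) * p 1 * p 2 + (729 / 140000 : ℝ) * p 1 ^ 2 * p 2 * Z p * pd 3 Z p + (369 / 560000 : ℝ) * p 1 ^ 3 * p 2 * pd 3 Z p + (1107 / 2240000000 : ℝ) * p 1 ^ 5 * Z p * pd 3 Z p + (1247 / 38400000000 : ℝ) * p 1 ^ 6 * pd 3 Z p + (4 : ℝ) * p 0 * p 3 + (-2 : ℝ) * p 0 * p 2 + (243 / 7000 : ℝ) * p 0 * p 1 * p 2 * Z p * pd 3 Z p + (9 / 56000 : ℝ) * p 0 * p 1 ^ 2 * p 2 * pd 3 Z p + (153 / 44800000 : ℝ) * p 0 * p 1 ^ 4 * Z p * pd 3 Z p + (529 / 13440000000 : ℝ) * p 0 * p 1 ^ 5 * pd 3 Z p + (81 / 1400 : ℝ) * p 0 ^ 2 * p 2 * Z p * pd 3 Z p + (-117 / 5600 : ℝ) * p 0 ^ 2 * p 1 * p 2 * pd 3 Z p + (-3 / 320000 :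 ℝ) * p 0 ^ 2 * p 1 ^ 3 * Z p * pd 3 Z p + (-319 / 179200000 : ℝ) * p 0 ^ 2 * p 1 ^ 4 * pd 3 Z p + (27 / 560 : ℝ) * p 0 ^ 3 * p 2 * pd 3 Z p + (-3 / 44800 : ℝ) * p 0 ^ 3 * p 1 ^ 2 * Z p * pd 3 Z p + (67 / 13440000 : ℝ) * p 0 ^ 3 * p 1 ^ 3 * pd 3 Z p + (3 / 44800 : ℝ) * p 0 ^ 4 * p 1 * Z p * pd 3 Z p + (187 / 5376000 : ℝ) * p 0 ^ 4 * p 1 ^ 2 * pd 3 Z p + (9 / 22400 : ℝ) * p 0 ^ 5 * Z p * pd 3 Z p + (-191 / 1344000 : ℝ) * p 0 ^ 5 * p 1 * pd 3 Z p + (409 / 2419200 : ℝ) * p 0 ^ 6 * pd 3 Z p := by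
      show deriv (fun t => potF4 Z (Function.update p 3 t)) (p 3) = _
      rw [hP3.deriv]; simp only [Function.update_eq_self]; push_cast; ring
    constructor
    · rw [e0, e1, e2, e3]
      simp only [potF4]
      apply mul_left_cancel₀ (hZnd p hp)
      linear_combination ((1/3 : ℝ) * p 0 * ((243 / 70 : ℝ) * p 2 ^ 2 + (729 / 140000 : ℝ) * p 1 ^ 2 * p 2 * Z p + (369 / 560000 : ℝ) * p 1 ^ 3 * p 2 + (1107 / 2240000000 : ℝ) * p 1 ^ 5 * Z p + (1247 / 38400000000 : ℝ) * p 1 ^ 6 + (243 / 7000 : ℝ) * p 0 * p 1 * p 2 * Z p + (9 / 56000 : ℝ) * p 0 * p 1 ^ 2 * p 2 + (153 / 44800000 : ℝ) * p 0 * p 1 ^ 4 * Z p + (529 / 13440000000 : ℝ) * p 0 * p 1 ^ 5 + (81 / 1400 : ℝ) * p 0 ^ 2 * p 2 * Z p + (-117 / 5600 : ℝ) * p 0 ^ 2 * p 1 * p 2 + (-3 / 320000 : ℝ) * p 0 ^ 2 * p 1 ^ 3 * Z p + (-319 / 179200000 : ℝ) * p 0 ^ 2 * p 1 ^ 4 +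 (27 / 560 : ℝ) * p 0 ^ 3 * p 2 + (-3 / 44800 : ℝ) * p 0 ^ 3 * p 1 ^ 2 * Z p + (67 / 13440000 : ℝ) * p 0 ^ 3 * p 1 ^ 3 + (3 / 44800 : ℝ) * p 0 ^ 4 * p 1 * Z p + (187 / 5376000 : ℝ) * p 0 ^ 4 * p 1 ^ 2 + (9 / 22400 : ℝ) * p 0 ^ 5 * Z p + (-191 / 1344000 : ℝ) * p 0 ^ 5 * p 1 + (409 / 2419200 : ℝ) * p 0 ^ 6)) * R0 + ((1/3 : ℝ) * p 1 * ((243 / 70 : ℝ) * p 2 ^ 2 + (729 / 140000 : ℝ) * p 1 ^ 2 * p 2 * Z p + (369 / 560000 : ℝ) * p 1 ^ 3 * p 2 + (1107 / 2240000000 : ℝ) * p 1 ^ 5 * Z p + (1247 / 38400000000 : ℝ) * p 1 ^ 6 + (243 / 7000 : ℝ) * p 0 * p 1 * p 2 * Z p + (9 / 56000 : ℝ) * p 0 * p 1 ^ 2 * p 2 + (153 / 44800000 : ℝ) * p 0 * p 1 ^ 4 * Z p + (529 / 13440000000 : ℝ) * p 0 * p 1 ^ 5 + (81 / 1400 : ℝ)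 * p 0 ^ 2 * p 2 * Z p + (-117 / 5600 : ℝ) * p 0 ^ 2 * p 1 * p 2 + (-3 / 320000 : ℝ) * p 0 ^ 2 * p 1 ^ 3 * Z p + (-319 / 179200000 : ℝ) * p 0 ^ 2 * p 1 ^ 4 + (27 / 560 : ℝ) * p 0 ^ 3 * p 2 + (-3 / 44800 : ℝ) * p 0 ^ 3 * p 1 ^ 2 * Z p + (67 / 13440000 : ℝ) * p 0 ^ 3 * p 1 ^ 3 + (3 / 44800 : ℝ) * p 0 ^ 4 * p 1 * Z p + (187 / 5376000 : ℝ) * p 0 ^ 4 * p 1 ^ 2 + (9 / 22400 : ℝ) * p 0 ^ 5 * Z p + (-191 / 1344000 : ℝ) * p 0 ^ 5 * p 1 + (409 / 2419200 : ℝ) * p 0 ^ 6)) * R1 +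
        (p 2 * ((243 / 70 : ℝ) * p 2 ^ 2 + (729 / 140000 : ℝ) * p 1 ^ 2 * p 2 * Z p + (369 / 560000 : ℝ) * p 1 ^ 3 * p 2 + (1107 / 2240000000 : ℝ) * p 1 ^ 5 * Z p + (1247 / 38400000000 : ℝ) * p 1 ^ 6 + (243 / 7000 : ℝ) * p 0 * p 1 * p 2 * Z p + (9 / 56000 : ℝ) * p 0 * p 1 ^ 2 * p 2 + (153 / 44800000 : ℝ) * p 0 * p 1 ^ 4 * Z p + (529 / 13440000000 : ℝ) * p 0 * p 1 ^ 5 + (81 / 1400 : ℝ) * p 0 ^ 2 * p 2 * Z p + (-117 / 5600 : ℝ) * p 0 ^ 2 * p 1 * p 2 + (-3 / 320000 : ℝ) * p 0 ^ 2 * p 1 ^ 3 * Z p + (-319 / 179200000 : ℝ) * p 0 ^ 2 * p 1 ^ 4 + (27 / 560 : ℝ) * p 0 ^ 3 * p 2 + (-3 / 44800 : ℝ) * p 0 ^ 3 * p 1 ^ 2 * Z p + (67 / 13440000 : ℝ) * p 0 ^ 3 * p 1 ^ 3 + (3 / 44800 : ℝ) * p 0 ^ 4 * p 1 * Z p + (187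 / 5376000 : ℝ) * p 0 ^ 4 * p 1 ^ 2 + (9 / 22400 : ℝ) * p 0 ^ 5 * Z p + (-191 / 1344000 : ℝ) * p 0 ^ 5 * p 1 + (409 / 2419200 : ℝ) * p 0 ^ 6)) * R2 + (p 3 * ((243 / 70 : ℝ) * p 2 ^ 2 + (729 / 140000 : ℝ) * p 1 ^ 2 * p 2 * Z p + (369 / 560000 : ℝ) * p 1 ^ 3 * p 2 + (1107 / 2240000000 : ℝ) * p 1 ^ 5 * Z p + (1247 / 38400000000 : ℝ) * p 1 ^ 6 + (243 / 7000 : ℝ) * p 0 * p 1 * p 2 * Z p + (9 / 56000 : ℝ) * p 0 * p 1 ^ 2 * p 2 + (153 / 44800000 : ℝ) * p 0 * p 1 ^ 4 * Z p + (529 / 13440000000 : ℝ) * p 0 * p 1 ^ 5 + (81 / 1400 : ℝ) * p 0 ^ 2 * p 2 * Z p + (-117 / 5600 : ℝ) * p 0 ^ 2 * p 1 * p 2 + (-3 / 320000 : ℝ) * p 0 ^ 2 * p 1 ^ 3 * Z p + (-319 / 179200000 : ℝ) * p 0 ^ 2 * p 1 ^ 4 + (27 / 560 : ℝ) * p 0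 ^ 3 * p 2 + (-3 / 44800 : ℝ) * p 0 ^ 3 * p 1 ^ 2 * Z p + (67 / 13440000 : ℝ) * p 0 ^ 3 * p 1 ^ 3 + (3 / 44800 : ℝ) * p 0 ^ 4 * p 1 * Z p + (187 / 5376000 : ℝ) * p 0 ^ 4 * p 1 ^ 2 + (9 / 22400 : ℝ) * p 0 ^ 5 * Z p + (-191 / 1344000 : ℝ) * p 0 ^ 5 * p 1 + (409 / 2419200 : ℝ) * p 0 ^ 6) * (3 * Z p ^ 2 - (p 0 ^ 2 / 48 + p 0 * p 1 / 80 + 3 * p 1 ^ 2 / 1600))) * (hZ4 p hp) - ((243 / 70 : ℝ) * p 2 ^ 2 + (729 / 140000 : ℝ) * p 1 ^ 2 * p 2 * Z p + (369 / 560000 : ℝ) * p 1 ^ 3 * p 2 + (1107 / 2240000000 : ℝ) * p 1 ^ 5 * Z p + (1247 / 38400000000 : ℝ) * p 1 ^ 6 + (243 / 7000 : ℝ) * p 0 * p 1 * p 2 * Z p + (9 / 56000 : ℝ) * p 0 * p 1 ^ 2 * p 2 + (153 / 44800000 : ℝ) * p 0 * p 1 ^ 4 * Z p + (529 / 13440000000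 : ℝ) * p 0 * p 1 ^ 5 + (81 / 1400 : ℝ) * p 0 ^ 2 * p 2 * Z p + (-117 / 5600 : ℝ) * p 0 ^ 2 * p 1 * p 2 + (-3 / 320000 : ℝ) * p 0 ^ 2 * p 1 ^ 3 * Z p + (-319 / 179200000 : ℝ) * p 0 ^ 2 * p 1 ^ 4 + (27 / 560 : ℝ) * p 0 ^ 3 * p 2 + (-3 / 44800 : ℝ) * p 0 ^ 3 * p 1 ^ 2 * Z p + (67 / 13440000 : ℝ) * p 0 ^ 3 * p 1 ^ 3 + (3 / 44800 : ℝ) * p 0 ^ 4 * p 1 * Z p + (187 / 5376000 : ℝ) * p 0 ^ 4 * p 1 ^ 2 + (9 / 22400 : ℝ) * p 0 ^ 5 * Z p + (-191 / 1344000 : ℝ) * p 0 ^ 5 * p 1 + (409 / 2419200 : ℝ) * p 0 ^ 6) * hcub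
    · apply mul_left_cancel₀ (hZnd p hp)
      linear_combination ((1/3 : ℝ) * p 0) * R0 + ((1/3 : ℝ) * p 1) * R1 + (p 2) * R2 - hcub
  exact ⟨fun p hp => (main p hp).1, fun p hp => (main p hp).2⟩
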